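/- With densities as above, the conditional expectation of the kernel M = P^{X|X₃} given the kernel M₁ = P^{X₁|X₃} (both on (Ω₃,𝒜₃,P^{X₃})) is given by E(M|M₁)(ω₁) = ∫_{ℝⁿ} x ∫_{Ω₃} g₃(x,ω₃) f₁₃(ω₁,ω₃) / (f₃(ω₃) f₁(ω₁)) dμ₃(ω₃) dμ(x), for P^{X₁}-almost all ω₁. -/

import Mathlib

open MeasureTheory ProbabilityTheory
open scoped ENNReal

open scoped NNReal


lemma dens_aux {β Ω₃ : Type*} [MeasurableSpace β] [MeasurableSpace Ω₃]
    (μβ : Measure β) [SigmaFinite μβ] (μ₃ : Measure Ω₃) [SigmaFinite μ₃]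
    {f₃ : Ω₃ → ℝ≥0∞} (hf₃ : Measurable f₃)
    {fβ : β × Ω₃ → ℝ≥0∞} (hfβ : Measurable fβ)
    (κ : Kernel Ω₃ β)
    (h : ∀ B A₃, MeasurableSet B → MeasurableSet A₃ →
      ((μβ.prod μ₃).withDensity fβ) (B ×ˢ A₃) = ∫⁻ ω₃ in A₃, κ ω₃ B ∂(μ₃.withDensity f₃))
    {B : Set β} (hB : MeasurableSet B) :
    ∀ᵐ ω₃ ∂μ₃, κ ω₃ B * f₃ ω₃ = ∫⁻ b in B, fβ (b, ω₃) ∂μβ := by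
  apply ae_eq_of_forall_setLIntegral_eq_of_sigmaFinite
    ((κ.measurable_coe hB).mul hf₃)
  · exact hfβ.lintegral_prod_left' (μ := μβ.restrict B)
  · intro A₃ hA₃ _
    have h1 : ∫⁻ ω₃ in A₃, κ ω₃ B * f₃ ω₃ ∂μ₃
        = ∫⁻ ω₃ in A₃, κ ω₃ B ∂(μ₃.withDensity f₃) := by
      rw [restrict_withDensity hA₃, lintegral_withDensity_eq_lintegral_mul _ hf₃
        (κ.measurable_coe hB)]
      exact lintegral_congr fun ω₃ => (mul_comm _ _)
    simp only [Pi.mul_apply]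
    rw [h1, ← h B A₃ hB hA₃, withDensity_apply _ (hB.prod hA₃),
      ← Measure.prod_restrict, lintegral_prod_symm _ hfβ.aemeasurable]

lemma bind_integral_id {Ω₃ E : Type*} [MeasurableSpace Ω₃] [NormedAddCommGroup E]
    [NormedSpace ℝ E] [MeasurableSpace E] [BorelSpace E] [SecondCountableTopology E]
    [CompleteSpace E]
    (σ : Measure Ω₃) [SFinite σ]
    (M : Kernel Ω₃ E) [IsMarkovKernel M]
    (hfin : ∫⁻ x, ‖x‖₊ ∂(σ.bind (fun ω₃ => M ω₃)) ≠ ∞) :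
    ∫ ω₃, (∫ x, x ∂(M ω₃)) ∂σ = ∫ x, x ∂(σ.bind (fun ω₃ => M ω₃)) := by
  have hmap : (σ.compProd M).map Prod.snd = σ.bind (fun ω₃ => M ω₃) := by
    ext s hs
    rw [Measure.map_apply measurable_snd hs, Measure.compProd_apply (measurable_snd hs),
      Measure.bind_apply hs M.measurable.aemeasurable]
    rfl
  have hint : Integrable (fun z : Ω₃ × E => z.2) (σ.compProd M) := by
    refine ⟨measurable_snd.aestronglyMeasurable, ?_⟩
    show (∫⁻ z, ‖(z : Ω₃ × E).2‖₊ ∂(σ.compProd M)) < ⊤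
    rw [Measure.lintegral_compProd measurable_snd.nnnorm.coe_nnreal_ennreal]
    simp only []
    rw [← Measure.lintegral_bind M.measurable.aemeasurable (measurable_nnnorm.coe_nnreal_ennreal : Measurable fun x : E => (‖x‖₊ : ENNReal)).aemeasurable]
    exact hfin.lt_top
  calc ∫ ω₃, (∫ x, x ∂(M ω₃)) ∂σ = ∫ z, z.2 ∂(σ.compProd M) :=
        (Measure.integral_compProd hint).symm
    _ = ∫ x, x ∂((σ.compProd M).map Prod.snd) := by
        rw [integral_map measurable_snd.aemeasurable]
        rw [hmap]; exact measurable_id.aestronglyMeasurable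
    _ = _ := by rw [hmap]

/-- Formula for `E(M|M₁)` in terms of densities: `E(M|M₁)(ω₁) =
∫ x ∫ g₃(x,ω₃) f₁₃(ω₁,ω₃) / (f₃(ω₃) f₁(ω₁)) dμ₃ dμ(x)`, `P^{X₁}`-a.s. -/
theorem stmt_13 {Ω Ω₁ Ω₃ : Type*} {𝒜 : MeasurableSpace Ω}
    {𝒜₁ : MeasurableSpace Ω₁} {𝒜₃ : MeasurableSpace Ω₃} {n : ℕ}
    (P : Measure Ω) [IsProbabilityMeasure P]
    (X : Ω → EuclideanSpace ℝ (Fin n)) (X₁ : Ω → Ω₁) (X₃ : Ω → Ω₃)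
    (hX : Measurable X) (hX₁ : Measurable X₁) (hX₃ : Measurable X₃)
    (hXint : Integrable X P)
    (μ : Measure (EuclideanSpace ℝ (Fin n))) [SigmaFinite μ]
    (μ₁ : Measure Ω₁) [SigmaFinite μ₁] (μ₃ : Measure Ω₃) [SigmaFinite μ₃]
    (f₁ : Ω₁ → ℝ≥0∞) (hf₁ : Measurable f₁)
    (f₃ : Ω₃ → ℝ≥0∞) (hf₃ : Measurable f₃)
    (f₁₃ : Ω₁ × Ω₃ → ℝ≥0∞) (hf₁₃ : Measurable f₁₃)
    (g₃ : EuclideanSpace ℝ (Fin n) × Ω₃ → ℝ≥0∞) (hg₃ : Measurable g₃)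
    (hd₁ : P.map X₁ = μ₁.withDensity f₁)
    (hd₃ : P.map X₃ = μ₃.withDensity f₃)
    (hd₁₃ : P.map (fun ω => (X₁ ω, X₃ ω)) = (μ₁.prod μ₃).withDensity f₁₃)
    (hdg₃ : P.map (fun ω => (X ω, X₃ ω)) = (μ.prod μ₃).withDensity g₃)
    (M : Kernel Ω₃ (EuclideanSpace ℝ (Fin n))) [IsMarkovKernel M]
    (M₁ : Kernel Ω₃ Ω₁) [IsMarkovKernel M₁]
    (hM : ∀ (B : Set (EuclideanSpace ℝ (Fin n))) (A₃ : Set Ω₃),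
      MeasurableSet B → MeasurableSet A₃ →
      P.map (fun ω => (X ω, X₃ ω)) (B ×ˢ A₃) = ∫⁻ ω₃ in A₃, M ω₃ B ∂(P.map X₃))
    (hM₁ : ∀ (A₁ : Set Ω₁) (A₃ : Set Ω₃), MeasurableSet A₁ → MeasurableSet A₃ →
      P.map (fun ω => (X₁ ω, X₃ ω)) (A₁ ×ˢ A₃) = ∫⁻ ω₃ in A₃, M₁ ω₃ A₁ ∂(P.map X₃))
    -- e is (a version of) E(M|M₁), defined w.r.t. Q = P^{X₃}
    (e : Ω₁ → EuclideanSpace ℝ (Fin n)) (hem : Measurable e)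
    (he : ∀ A₁ : Set Ω₁, MeasurableSet A₁ →
      ∫ ω₃, (M₁ ω₃ A₁).toReal • (∫ x, x ∂(M ω₃)) ∂(P.map X₃) =
        ∫ ω₁ in A₁, e ω₁ ∂((P.map X₃).bind (fun ω₃ => M₁ ω₃))) :
    ∀ᵐ ω₁ ∂(P.map X₁),
      e ω₁ = ∫ x, (∫⁻ ω₃, g₃ (x, ω₃) * f₁₃ (ω₁, ω₃) / (f₃ ω₃ * f₁ ω₁) ∂μ₃).toReal • x ∂μ := by
  -- probability measures
  have hPX₁ : IsProbabilityMeasure (P.map X₁) := Measure.isProbabilityMeasure_map hX₁.aemeasurable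
  have hPX₃ : IsProbabilityMeasure (P.map X₃) := Measure.isProbabilityMeasure_map hX₃.aemeasurable
  have hPX : IsProbabilityMeasure (P.map X) := Measure.isProbabilityMeasure_map hX.aemeasurable
  have hpair : Measurable (fun ω => (X ω, X₃ ω)) := hX.prodMk hX₃
  have hpair₁ : Measurable (fun ω => (X₁ ω, X₃ ω)) := hX₁.prodMk hX₃
  -- F1
  have hbind₁ : (P.map X₃).bind (fun ω₃ => M₁ ω₃) = P.map X₁ := by
    ext s hs
    rw [Measure.bind_apply hs M₁.measurable.aemeasurable, ← setLIntegral_univ, ← hM₁ s Set.univ hs .univ,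
      Measure.map_apply hpair₁ (hs.prod .univ), Measure.map_apply hX₁ hs]
    congr 1
    ext ω; simp
  -- F2
  have hbindM : (P.map X₃).bind (fun ω₃ => M ω₃) = P.map X := by
    ext s hs
    rw [Measure.bind_apply hs M.measurable.aemeasurable, ← setLIntegral_univ, ← hM s Set.univ hs .univ,
      Measure.map_apply hpair (hs.prod .univ), Measure.map_apply hX hs]
    congr 1
    ext ω; simp
  -- F3
  have hC : ∫⁻ x, ‖x‖₊ ∂(P.map X) ≠ ∞ := by
    rw [lintegral_map measurable_nnnorm.coe_nnreal_ennreal hX]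
    exact hXint.2.ne
  -- F4, F5
  have hf₃fin : ∀ᵐ ω₃ ∂μ₃, f₃ ω₃ < ∞ := by
    refine ae_lt_top hf₃ ?_
    have : (μ₃.withDensity f₃) Set.univ = 1 := by rw [← hd₃]; simp
    rw [withDensity_apply _ .univ, setLIntegral_univ] at this
    simp [this]
  have hf₁fin : ∀ᵐ ω₁ ∂μ₁, f₁ ω₁ < ∞ := by
    refine ae_lt_top hf₁ ?_
    have : (μ₁.withDensity f₁) Set.univ = 1 := by rw [← hd₁]; simp
    rw [withDensity_apply _ .univ, setLIntegral_univ] at this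
    simp [this]
  -- F6, F7 : kernel densities
  have densM : ∀ B : Set (EuclideanSpace ℝ (Fin n)), MeasurableSet B →
      ∀ᵐ ω₃ ∂μ₃, M ω₃ B * f₃ ω₃ = ∫⁻ x in B, g₃ (x, ω₃) ∂μ := by
    intro B hB
    refine dens_aux μ μ₃ hf₃ hg₃ M (fun B A₃ hB hA₃ => ?_) hB
    rw [← hdg₃, ← hd₃]; exact hM B A₃ hB hA₃
  have densM₁ : ∀ A₁ : Set Ω₁, MeasurableSet A₁ →
      ∀ᵐ ω₃ ∂μ₃, M₁ ω₃ A₁ * f₃ ω₃ = ∫⁻ ω₁ in A₁, f₁₃ (ω₁, ω₃) ∂μ₁ := by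
    intro A₁ hA₁
    refine dens_aux μ₁ μ₃ hf₃ hf₁₃ M₁ (fun B A₃ hB hA₃ => ?_) hA₁
    rw [← hd₁₃, ← hd₃]; exact hM₁ B A₃ hB hA₃
  -- F8 : on {f₁ = 0}, the conditional density vanishes
  have hzero₁ : ∀ᵐ ω₁ ∂μ₁, f₁ ω₁ = 0 → ∫⁻ ω₃, f₁₃ (ω₁, ω₃) ∂μ₃ = 0 := by
    have hZ : MeasurableSet {ω₁ | f₁ ω₁ = 0} := hf₁ (measurableSet_singleton 0)
    have gmeas : Measurable fun ω₁ => ∫⁻ ω₃, f₁₃ (ω₁, ω₃) ∂μ₃ := hf₁₃.lintegral_prod_right'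
    have hνZ : (μ₁.withDensity f₁) {ω₁ | f₁ ω₁ = 0} = 0 := by
      rw [withDensity_apply _ hZ,
        setLIntegral_congr_fun hZ (fun ω hω => hω)]
      simp
    have hπZ : ∫⁻ ω₁ in {ω₁ | f₁ ω₁ = 0}, (∫⁻ ω₃, f₁₃ (ω₁, ω₃) ∂μ₃) ∂μ₁ = 0 := by
      have h1 : ((μ₁.prod μ₃).withDensity f₁₃) ({ω₁ | f₁ ω₁ = 0} ×ˢ Set.univ) = 0 := by
        rw [← hd₁₃, Measure.map_apply hpair₁ (hZ.prod .univ)]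
        have : (fun ω => (X₁ ω, X₃ ω)) ⁻¹' ({ω₁ | f₁ ω₁ = 0} ×ˢ Set.univ)
            = X₁ ⁻¹' {ω₁ | f₁ ω₁ = 0} := by ext ω; simp
        rw [this, ← Measure.map_apply hX₁ hZ, hd₁, hνZ]
      rw [withDensity_apply _ (hZ.prod .univ), ← Measure.prod_restrict,
        lintegral_prod _ hf₁₃.aemeasurable] at h1
      simpa using h1
    have h2 : (fun ω₁ => ∫⁻ ω₃, f₁₃ (ω₁, ω₃) ∂μ₃) =ᵐ[μ₁.restrict {ω₁ | f₁ ω₁ = 0}] 0 :=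
      (lintegral_eq_zero_iff gmeas).mp hπZ
    exact (ae_restrict_iff' hZ).mp h2
  -- abbreviations
  set dd : Ω₁ → EuclideanSpace ℝ (Fin n) → ℝ≥0∞ :=
    fun ω₁ x => ∫⁻ ω₃, g₃ (x, ω₃) * f₁₃ (ω₁, ω₃) / f₃ ω₃ ∂μ₃ with hdd_def
  set cc : Ω₁ → EuclideanSpace ℝ (Fin n) → ℝ≥0∞ :=
    fun ω₁ x => ∫⁻ ω₃, g₃ (x, ω₃) * f₁₃ (ω₁, ω₃) / (f₃ ω₃ * f₁ ω₁) ∂μ₃ with hcc_def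
  set hfun : Ω₁ → EuclideanSpace ℝ (Fin n) :=
    fun ω₁ => ∫ x, (cc ω₁ x).toReal • x ∂μ with hh_def
  -- measurability of dd, cc, hfun
  have hddmeas : Measurable fun p : Ω₁ × EuclideanSpace ℝ (Fin n) => dd p.1 p.2 := by
    apply Measurable.lintegral_prod_right'
      (f := fun q : (Ω₁ × EuclideanSpace ℝ (Fin n)) × Ω₃ =>
        g₃ (q.1.2, q.2) * f₁₃ (q.1.1, q.2) / f₃ q.2)
    exact ((hg₃.comp ((measurable_snd.comp measurable_fst).prodMk measurable_snd)).mul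
      (hf₁₃.comp ((measurable_fst.comp measurable_fst).prodMk measurable_snd))).div
      (hf₃.comp measurable_snd)
  have hccmeas : Measurable fun p : Ω₁ × EuclideanSpace ℝ (Fin n) => cc p.1 p.2 := by
    apply Measurable.lintegral_prod_right'
      (f := fun q : (Ω₁ × EuclideanSpace ℝ (Fin n)) × Ω₃ =>
        g₃ (q.1.2, q.2) * f₁₃ (q.1.1, q.2) / (f₃ q.2 * f₁ q.1.1))
    exact ((hg₃.comp ((measurable_snd.comp measurable_fst).prodMk measurable_snd)).mul
      (hf₁₃.comp ((measurable_fst.comp measurable_fst).prodMk measurable_snd))).div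
      ((hf₃.comp measurable_snd).mul (hf₁.comp (measurable_fst.comp measurable_fst)))
  have hhsm : StronglyMeasurable hfun := by
    apply StronglyMeasurable.integral_prod_right'
      (f := fun p : Ω₁ × EuclideanSpace ℝ (Fin n) => (cc p.1 p.2).toReal • p.2)
    exact ((hccmeas.ennreal_toReal).smul measurable_snd).stronglyMeasurable
  -- cancellation of f₁
  have hcancel : ∀ ω₁, f₁ ω₁ ≠ 0 → f₁ ω₁ ≠ ∞ → ∀ x, f₁ ω₁ * cc ω₁ x = dd ω₁ x := by
    intro ω₁ h0 hfin x
    rw [hcc_def, hdd_def]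
    simp only []
    have hmeas' : Measurable fun ω₃ => g₃ (x, ω₃) * f₁₃ (ω₁, ω₃) / (f₃ ω₃ * f₁ ω₁) :=
      ((hg₃.comp (measurable_const.prodMk measurable_id)).mul
        (hf₁₃.comp (measurable_const.prodMk measurable_id))).div (hf₃.mul measurable_const)
    rw [← lintegral_const_mul _ hmeas']
    congr 1
    funext ω₃
    rw [div_eq_mul_inv, div_eq_mul_inv, ENNReal.mul_inv (Or.inr hfin) (Or.inr h0)]
    calc f₁ ω₁ * (g₃ (x, ω₃) * f₁₃ (ω₁, ω₃) * ((f₃ ω₃)⁻¹ * (f₁ ω₁)⁻¹))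
        = (f₁ ω₁ * (f₁ ω₁)⁻¹) * (g₃ (x, ω₃) * f₁₃ (ω₁, ω₃) * (f₃ ω₃)⁻¹) := by ring
      _ = g₃ (x, ω₃) * f₁₃ (ω₁, ω₃) * (f₃ ω₃)⁻¹ := by
          rw [ENNReal.mul_inv_cancel h0 hfin, one_mul]
  -- the master computation, for each measurable set A₁
  have main : ∀ A₁ : Set Ω₁, MeasurableSet A₁ →
      (∫ ω₃, (M₁ ω₃ A₁).toReal • (∫ x, x ∂(M ω₃)) ∂(P.map X₃)
        = ∫ ω₁ in A₁, hfun ω₁ ∂(P.map X₁)) ∧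
      (∫⁻ ω₁ in A₁, ∫⁻ x, dd ω₁ x * ‖x‖₊ ∂μ ∂μ₁ ≠ ∞) := by
    intro A₁ hA₁
    -- the density of `M₁ · A₁` against `Q`
    set F : Ω₃ → ℝ≥0∞ := fun ω₃ => ∫⁻ ω₁ in A₁, f₁₃ (ω₁, ω₃) ∂μ₁ with hF_def
    have hFmeas : Measurable F := hf₁₃.lintegral_prod_left' (μ := μ₁.restrict A₁)
    set G : EuclideanSpace ℝ (Fin n) → ℝ≥0∞ :=
      fun x => ∫⁻ ω₃, g₃ (x, ω₃) * F ω₃ / f₃ ω₃ ∂μ₃ with hG_def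
    have hGmeas : Measurable G := by
      apply Measurable.lintegral_prod_right'
        (f := fun p : EuclideanSpace ℝ (Fin n) × Ω₃ => g₃ p * F p.2 / f₃ p.2)
      exact (hg₃.mul (hFmeas.comp measurable_snd)).div (hf₃.comp measurable_snd)
    set σ : Measure Ω₃ := (μ₃.withDensity f₃).withDensity (fun ω₃ => M₁ ω₃ A₁) with hσ_def
    have hσle : σ ≤ μ₃.withDensity f₃ := by
      refine Measure.le_iff.mpr fun s hs => ?_
      rw [hσ_def, withDensity_apply _ hs]
      calc ∫⁻ ω₃ in s, M₁ ω₃ A₁ ∂(μ₃.withDensity f₃)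
          ≤ ∫⁻ _ in s, 1 ∂(μ₃.withDensity f₃) :=
            setLIntegral_mono measurable_const fun ω₃ _ => prob_le_one
        _ = (μ₃.withDensity f₃) s := by rw [setLIntegral_one]
    have hσfinI : IsFiniteMeasure σ := by
      constructor
      refine lt_of_le_of_lt (Measure.le_iff'.mp hσle Set.univ) ?_
      rw [← hd₃]; exact measure_lt_top _ _
    have hle2 : ∫⁻ x, ‖x‖₊ ∂(σ.bind fun ω₃ => M ω₃) ≠ ∞ := by
      have hmono : ∫⁻ x, ‖x‖₊ ∂(σ.bind fun ω₃ => M ω₃)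
          ≤ ∫⁻ x, ‖x‖₊ ∂((μ₃.withDensity f₃).bind fun ω₃ => M ω₃) := by
        rw [Measure.lintegral_bind M.measurable.aemeasurable measurable_nnnorm.coe_nnreal_ennreal.aemeasurable,
          Measure.lintegral_bind M.measurable.aemeasurable measurable_nnnorm.coe_nnreal_ennreal.aemeasurable]
        exact lintegral_mono' hσle le_rfl
      refine ne_top_of_le_ne_top ?_ hmono
      rw [← hd₃, hbindM]; exact hC
    -- the bound measure is `μ.withDensity G`
    have hbindσ : σ.bind (fun ω₃ => M ω₃) = μ.withDensity G := by
      ext B hB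
      rw [Measure.bind_apply hB M.measurable.aemeasurable, withDensity_apply _ hB]
      have h1 : ∫⁻ ω₃, M ω₃ B ∂σ = ∫⁻ ω₃, f₃ ω₃ * (M₁ ω₃ A₁ * M ω₃ B) ∂μ₃ := by
        rw [hσ_def, lintegral_withDensity_eq_lintegral_mul _ (M₁.measurable_coe hA₁)
            (M.measurable_coe hB)]
        simp only [Pi.mul_apply]
        rw [lintegral_withDensity_eq_lintegral_mul _ hf₃ (g := fun ω₃ => M₁ ω₃ A₁ * M ω₃ B)
            ((M₁.measurable_coe hA₁).mul (M.measurable_coe hB))]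
        simp only [Pi.mul_apply]
      rw [h1]
      have h2 : (fun ω₃ => f₃ ω₃ * (M₁ ω₃ A₁ * M ω₃ B)) =ᵐ[μ₃]
          fun ω₃ => (∫⁻ x in B, g₃ (x, ω₃) ∂μ) * F ω₃ / f₃ ω₃ := by
        filter_upwards [hf₃fin, densM B hB, densM₁ A₁ hA₁] with ω₃ h1' h2' h3'
        by_cases h0 : f₃ ω₃ = 0
        · have hF0 : F ω₃ = 0 := by simp only [hF_def]; rw [← h3', h0, mul_zero]
          rw [h0, hF0]; simp
        · have hF' : M₁ ω₃ A₁ * f₃ ω₃ = F ω₃ := by simp only [hF_def]; exact h3'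
          rw [← h2', ← hF', ENNReal.eq_div_iff h0 h1'.ne]; ring
      rw [lintegral_congr_ae h2]
      have h3 : ∀ ω₃, (∫⁻ x in B, g₃ (x, ω₃) ∂μ) * F ω₃ / f₃ ω₃
          = ∫⁻ x in B, g₃ (x, ω₃) * F ω₃ / f₃ ω₃ ∂μ := by
        intro ω₃
        have hm : Measurable fun x => g₃ (x, ω₃) := hg₃.comp (measurable_id.prodMk measurable_const)
        rw [mul_div_assoc, ← lintegral_mul_const'' _ hm.aemeasurable]
        congr 1; funext x; rw [mul_div_assoc]
      simp_rw [h3]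
      rw [lintegral_lintegral_swap]
      exact (((hg₃.comp measurable_swap).mul (hFmeas.comp measurable_fst)).div
        (hf₃.comp measurable_fst)).aemeasurable
    have hGint : ∫⁻ x, G x ∂μ ≠ ∞ := by
      have h1 : (μ.withDensity G) Set.univ ≠ ∞ := by
        rw [← hbindσ, Measure.bind_apply .univ M.measurable.aemeasurable]
        simp only [measure_univ, lintegral_one]
        exact (measure_ne_top σ _)
      rwa [withDensity_apply _ .univ, setLIntegral_univ] at h1
    have hGfin : ∀ᵐ x ∂μ, G x < ∞ := ae_lt_top hGmeas hGint
    have hGnorm : ∫⁻ x, G x * ‖x‖₊ ∂μ ≠ ∞ := by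
      have h1 := lintegral_withDensity_eq_lintegral_mul μ hGmeas
        (measurable_nnnorm.coe_nnreal_ennreal : Measurable fun x : EuclideanSpace ℝ (Fin n) => (‖x‖₊ : ℝ≥0∞))
      have h2 : ∫⁻ x, ‖x‖₊ ∂(μ.withDensity G) ≠ ∞ := by rw [← hbindσ]; exact hle2
      rw [h1] at h2
      exact h2
    -- Tonelli: `∫⁻ in A₁, dd = G`
    have hddx : ∀ x : EuclideanSpace ℝ (Fin n), Measurable fun ω₁ => dd ω₁ x := by
      intro x
      have := hddmeas.comp ((measurable_id.prodMk measurable_const :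
        Measurable fun ω₁ : Ω₁ => (ω₁, x)))
      exact this
    have T1 : ∀ x, ∫⁻ ω₁ in A₁, dd ω₁ x ∂μ₁ = G x := by
      intro x
      rw [hdd_def, hG_def]
      simp only []
      rw [lintegral_lintegral_swap (((hg₃.comp (measurable_const.prodMk measurable_snd)).mul
        (hf₁₃.comp (measurable_fst.prodMk measurable_snd))).div
        (hf₃.comp measurable_snd)).aemeasurable]
      congr 1; funext ω₃
      have hm : Measurable fun ω₁ => f₁₃ (ω₁, ω₃) := hf₁₃.comp (measurable_id.prodMk measurable_const)
      have hrw : ∀ ω₁, g₃ (x, ω₃) * f₁₃ (ω₁, ω₃) / f₃ ω₃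
          = (g₃ (x, ω₃) / f₃ ω₃) * f₁₃ (ω₁, ω₃) := by
        intro ω₁; rw [div_eq_mul_inv, div_eq_mul_inv]; ring
      simp_rw [hrw]
      rw [lintegral_const_mul _ hm, div_eq_mul_inv, div_eq_mul_inv]
      ring
    -- integrability of the scalar-weighted function on the product
    have hnormbd : ∀ p : Ω₁ × EuclideanSpace ℝ (Fin n),
        (‖(dd p.1 p.2).toReal • p.2‖₊ : ℝ≥0∞) ≤ dd p.1 p.2 * ‖p.2‖₊ := by
      intro p
      rw [nnnorm_smul, ENNReal.coe_mul]
      refine mul_le_mul_left ?_ _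
      refine le_trans (le_of_eq ?_) (ENNReal.coe_toNNReal_le_self (a := dd p.1 p.2))
      congr 1
      rw [Real.nnnorm_of_nonneg ENNReal.toReal_nonneg]
      rfl
    have hΦint : Integrable (Function.uncurry fun ω₁ x => (dd ω₁ x).toReal • x)
        ((μ₁.restrict A₁).prod μ) := by
      constructor
      · exact ((hddmeas.ennreal_toReal).smul measurable_snd).aestronglyMeasurable
      · show (∫⁻ p, _ ∂_) < ⊤
        calc ∫⁻ p, (‖(Function.uncurry fun ω₁ x => (dd ω₁ x).toReal • x) p‖₊ : ℝ≥0∞)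
              ∂((μ₁.restrict A₁).prod μ)
            ≤ ∫⁻ p, dd p.1 p.2 * ‖p.2‖₊ ∂((μ₁.restrict A₁).prod μ) :=
              lintegral_mono fun p => hnormbd p
          _ = ∫⁻ x, ∫⁻ ω₁ in A₁, dd ω₁ x * ‖x‖₊ ∂μ₁ ∂μ :=
              lintegral_prod_symm _ (hddmeas.mul measurable_snd.nnnorm.coe_nnreal_ennreal).aemeasurable
          _ = ∫⁻ x, G x * ‖x‖₊ ∂μ := by
              congr 1; funext x
              rw [lintegral_mul_const'' _ (hddx x).aemeasurable, T1 x]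
          _ < ⊤ := hGnorm.lt_top
    -- second claim
    have claim2 : ∫⁻ ω₁ in A₁, ∫⁻ x, dd ω₁ x * ‖x‖₊ ∂μ ∂μ₁ ≠ ∞ := by
      rw [lintegral_lintegral_swap (hddmeas.mul measurable_snd.nnnorm.coe_nnreal_ennreal).aemeasurable]
      have : ∀ x, ∫⁻ ω₁ in A₁, dd ω₁ x * ‖x‖₊ ∂μ₁ = G x * ‖x‖₊ := by
        intro x
        rw [lintegral_mul_const'' _ (hddx x).aemeasurable, T1 x]
      simp_rw [this]
      exact hGnorm
    refine ⟨?_, claim2⟩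
    -- left-hand side equals `∫ x, (G x).toReal • x ∂μ`
    have hL : ∫ ω₃, (M₁ ω₃ A₁).toReal • (∫ x, x ∂(M ω₃)) ∂(P.map X₃)
        = ∫ x, (G x).toReal • x ∂μ := by
      have hσ' : σ = (μ₃.withDensity f₃).withDensity
          (fun ω₃ => ((M₁ ω₃ A₁).toNNReal : ℝ≥0∞)) := by
        rw [hσ_def]
        exact withDensity_congr_ae (Filter.Eventually.of_forall fun ω₃ =>
          (ENNReal.coe_toNNReal (measure_ne_top _ _)).symm)
      calc ∫ ω₃, (M₁ ω₃ A₁).toReal • (∫ x, x ∂(M ω₃)) ∂(P.map X₃)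
          = ∫ ω₃, (∫ x, x ∂(M ω₃)) ∂σ := by
            rw [hd₃, hσ', integral_withDensity_eq_integral_smul
              ((M₁.measurable_coe hA₁).ennreal_toNNReal)]
            refine integral_congr_ae (Filter.Eventually.of_forall fun ω₃ => ?_)
            show (M₁ ω₃ A₁).toReal • (∫ x, x ∂(M ω₃)) = (M₁ ω₃ A₁).toNNReal • (∫ x, x ∂(M ω₃))
            rw [NNReal.smul_def, ENNReal.coe_toNNReal_eq_toReal]
        _ = ∫ x, x ∂(σ.bind fun ω₃ => M ω₃) := bind_integral_id σ M hle2
        _ = ∫ x, x ∂(μ.withDensity G) := by rw [hbindσ]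
        _ = ∫ x, (G x).toReal • x ∂μ := by
            rw [withDensity_congr_ae (hGfin.mono fun x hx =>
                (ENNReal.coe_toNNReal hx.ne).symm),
              integral_withDensity_eq_integral_smul hGmeas.ennreal_toNNReal]
            refine integral_congr_ae (Filter.Eventually.of_forall fun x => ?_)
            show (G x).toNNReal • x = (G x).toReal • x
            rw [NNReal.smul_def, ENNReal.coe_toNNReal_eq_toReal]
    rw [hL]
    -- right-hand side equals `∫ x, (G x).toReal • x ∂μ` too
    have E3 : ∀ᵐ ω₁ ∂μ₁, ((f₁ ω₁).toNNReal : ℝ≥0) • hfun ω₁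
        = ∫ x, (dd ω₁ x).toReal • x ∂μ := by
      filter_upwards [hf₁fin, hzero₁] with ω₁ hfin hz
      by_cases h0 : f₁ ω₁ = 0
      · have hz'' : (fun ω₃ => f₁₃ (ω₁, ω₃)) =ᵐ[μ₃] 0 :=
          (lintegral_eq_zero_iff (hf₁₃.comp (measurable_const.prodMk measurable_id))).mp (hz h0)
        have hdd0 : ∀ x, dd ω₁ x = 0 := by
          intro x
          rw [hdd_def]
          simp only []
          have : (fun ω₃ => g₃ (x, ω₃) * f₁₃ (ω₁, ω₃) / f₃ ω₃) =ᵐ[μ₃] 0 := by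
            filter_upwards [hz''] with ω₃ hω₃
            simp [hω₃]
          rw [lintegral_congr_ae this]; simp
        simp [h0, hdd0]
      · rw [hh_def]
        simp only []
        have hstep : ((f₁ ω₁).toNNReal : ℝ≥0) • (∫ x, (cc ω₁ x).toReal • x ∂μ)
            = ∫ x, (f₁ ω₁).toReal • ((cc ω₁ x).toReal • x) ∂μ := by
          rw [NNReal.smul_def, ← integral_smul]; rfl
        rw [hstep]
        refine integral_congr_ae (Filter.Eventually.of_forall fun x => ?_)
        show (f₁ ω₁).toReal • (cc ω₁ x).toReal • x = (dd ω₁ x).toReal • x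
        rw [smul_smul, ← ENNReal.toReal_mul, hcancel ω₁ h0 hfin.ne x]
    calc ∫ x, (G x).toReal • x ∂μ
        = ∫ x, (∫ ω₁ in A₁, (dd ω₁ x).toReal ∂μ₁) • x ∂μ := by
          refine integral_congr_ae ?_
          filter_upwards [hGfin] with x hx
          have hfin' : ∀ᵐ ω₁ ∂(μ₁.restrict A₁), dd ω₁ x < ∞ :=
            ae_lt_top (hddx x) (by rw [T1 x]; exact hx.ne)
          rw [integral_toReal ((hddx x).aemeasurable) hfin', T1 x]
      _ = ∫ ω₁ in A₁, (∫ x, (dd ω₁ x).toReal • x ∂μ) ∂μ₁ := by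
          rw [integral_integral_swap hΦint]
          congr 1; funext x
          rw [integral_smul_const]
      _ = ∫ ω₁, ((f₁ ω₁).toNNReal : ℝ≥0) • hfun ω₁ ∂(μ₁.restrict A₁) :=
          (integral_congr_ae (ae_restrict_of_ae E3)).symm
      _ = ∫ ω₁, hfun ω₁ ∂((μ₁.restrict A₁).withDensity f₁) := by
          rw [withDensity_congr_ae (μ := μ₁.restrict A₁)
              (ae_restrict_of_ae (hf₁fin.mono fun ω₁ h => (ENNReal.coe_toNNReal h.ne).symm)),
            integral_withDensity_eq_integral_smul hf₁.ennreal_toNNReal]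
      _ = ∫ ω₁ in A₁, hfun ω₁ ∂(P.map X₁) := by
          rw [hd₁, restrict_withDensity hA₁]
  -- set-integral equality for all measurable sets
  have key : ∀ A₁ : Set Ω₁, MeasurableSet A₁ →
      ∫ ω₁ in A₁, e ω₁ ∂(P.map X₁) = ∫ ω₁ in A₁, hfun ω₁ ∂(P.map X₁) := by
    intro A₁ hA₁
    have h1 := he A₁ hA₁
    rw [hbind₁] at h1
    rw [← h1]
    exact (main A₁ hA₁).1
  -- integrability of hfun
  have hccx : ∀ ω₁, Measurable fun x => cc ω₁ x :=
    fun ω₁ => hccmeas.comp (measurable_const.prodMk measurable_id)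
  have hfunint : Integrable hfun (P.map X₁) := by
    refine ⟨hhsm.aestronglyMeasurable, ?_⟩
    show (∫⁻ ω₁, ‖hfun ω₁‖₊ ∂(P.map X₁)) < ⊤
    have hbound : ∀ ω₁, (‖hfun ω₁‖₊ : ℝ≥0∞) ≤ ∫⁻ x, cc ω₁ x * ‖x‖₊ ∂μ := by
      intro ω₁
      rw [hh_def]
      refine le_trans (enorm_integral_le_lintegral_enorm _) (lintegral_mono fun x => ?_)
      show (‖(cc ω₁ x).toReal • x‖₊ : ℝ≥0∞) ≤ cc ω₁ x * ‖x‖₊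
      rw [nnnorm_smul, ENNReal.coe_mul]
      refine mul_le_mul_left ?_ _
      refine le_trans (le_of_eq ?_) (ENNReal.coe_toNNReal_le_self (a := cc ω₁ x))
      congr 1
      rw [Real.nnnorm_of_nonneg ENNReal.toReal_nonneg]
      rfl
    have hccnorm_meas : Measurable fun ω₁ => ∫⁻ x, cc ω₁ x * ‖x‖₊ ∂μ :=
      Measurable.lintegral_prod_right' (hccmeas.mul measurable_snd.nnnorm.coe_nnreal_ennreal)
    calc ∫⁻ ω₁, ‖hfun ω₁‖₊ ∂(P.map X₁)
        ≤ ∫⁻ ω₁, (∫⁻ x, cc ω₁ x * ‖x‖₊ ∂μ) ∂(P.map X₁) := lintegral_mono hbound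
      _ = ∫⁻ ω₁, f₁ ω₁ * (∫⁻ x, cc ω₁ x * ‖x‖₊ ∂μ) ∂μ₁ := by
          rw [hd₁, lintegral_withDensity_eq_lintegral_mul _ hf₁ hccnorm_meas]
          simp only [Pi.mul_apply]
      _ ≤ ∫⁻ ω₁, (∫⁻ x, dd ω₁ x * ‖x‖₊ ∂μ) ∂μ₁ := by
          refine lintegral_mono_ae ?_
          filter_upwards [hf₁fin] with ω₁ hfin
          by_cases h0 : f₁ ω₁ = 0
          · rw [h0, zero_mul]; exact zero_le
          · rw [← lintegral_const_mul _ (f := fun x => cc ω₁ x * (‖x‖₊ : ℝ≥0∞)) ((hccx ω₁).mul measurable_nnnorm.coe_nnreal_ennreal)]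
            refine le_of_eq (lintegral_congr fun x => ?_)
            rw [← mul_assoc, hcancel ω₁ h0 hfin.ne x]
      _ = ∫⁻ ω₁ in Set.univ, (∫⁻ x, dd ω₁ x * ‖x‖₊ ∂μ) ∂μ₁ := by
          rw [Measure.restrict_univ]
      _ < ⊤ := ((main Set.univ .univ).2).lt_top
  -- localization and conclusion
  have hmeas_h : Measurable hfun := hhsm.measurable
  have heqN : ∀ N : ℕ, e =ᵐ[(P.map X₁).restrict {ω₁ | ‖e ω₁‖ ≤ (N : ℝ)}] hfun := by
    intro N
    have hS : MeasurableSet {ω₁ | ‖e ω₁‖ ≤ (N : ℝ)} := measurableSet_le hem.norm measurable_const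
    apply ae_eq_of_forall_setIntegral_eq_of_sigmaFinite
    · intro s hs _
      refine Integrable.integrableOn ?_
      exact (integrable_const ((N : ℝ))).mono' hem.aestronglyMeasurable
        ((ae_restrict_iff' hS).2 (Filter.Eventually.of_forall fun ω₁ hω₁ => hω₁))
    · intro s hs _
      exact (hfunint.restrict).integrableOn
    · intro s hs _
      rw [Measure.restrict_restrict hs]
      exact key (s ∩ {ω₁ | ‖e ω₁‖ ≤ (N : ℝ)}) (hs.inter hS)
  have hDmeas : MeasurableSet {ω₁ | ¬ e ω₁ = hfun ω₁} :=
    (measurableSet_eq_fun hem hmeas_h).compl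
  have final : ∀ᵐ ω₁ ∂(P.map X₁), e ω₁ = hfun ω₁ := by
    rw [ae_iff]
    refine measure_mono_null (fun ω₁ hω₁ => ?_)
      (measure_iUnion_null (s := fun N : ℕ =>
        {ω₁ | ¬ e ω₁ = hfun ω₁} ∩ {ω₁ | ‖e ω₁‖ ≤ (N : ℝ)}) fun N => ?_)
    · obtain ⟨N, hN⟩ := exists_nat_ge ‖e ω₁‖
      exact Set.mem_iUnion.2 ⟨N, hω₁, hN⟩
    · have hS : MeasurableSet {ω₁ | ‖e ω₁‖ ≤ (N : ℝ)} := measurableSet_le hem.norm measurable_const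
      have := heqN N
      rw [Filter.EventuallyEq, ae_iff] at this
      rw [Measure.restrict_apply hDmeas] at this
      exact this
  exact final
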